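/- For positive integers d, n, a, the number of partitions with perimeter n into (d+1)-distinct parts all ≥ a is at most the number of partitions with perimeter n into d-distinct parts all ≥ a. -/

import Mathlib

/-- A partition: a nonempty, nonincreasing list of positive integers. -/
def IsPartition (l : List ℕ) : Prop :=
  l ≠ [] ∧ l.Pairwise (· ≥ ·) ∧ ∀ x ∈ l, 0 < x

/-- Perimeter: (largest part) + (number of parts) - 1. -/
def perimeter (l : List ℕ) : ℕ := l.headI + l.length - 1

/-- d-distinct: consecutive parts differ by at least d. -/
def DDistinct (d : ℕ) (l : List ℕ) : Prop := l.Chain' (fun x y => y + d ≤ x)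

/-- Subtract from each element the number of elements after it. -/
def shrink : List ℕ → List ℕ
  | [] => []
  | x :: xs => (x - xs.length) :: shrink xs

lemma shrink_length (l : List ℕ) : (shrink l).length = l.length := by
  induction l with
  | nil => rfl
  | cons x xs ih => simp [shrink, ih]

lemma head_add {D a : ℕ} (hD : 1 ≤ D) :
    ∀ (xs : List ℕ) (x : ℕ), (x :: xs).Chain' (fun p q => q + D ≤ p) →
      (∀ y ∈ x :: xs, a ≤ y) → a + xs.length ≤ x := by
  intro xs
  induction xs with
  | nil => intro x _ h; simpa using h x (by simp)
  | cons y ys ih =>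
      intro x hc hm
      have h1 : a + ys.length ≤ y :=
        ih y hc.tail (fun z hz => hm z (List.mem_cons_of_mem _ hz))
      have h2 : y + D ≤ x := (List.isChain_cons_cons.mp hc).1
      simp only [List.length_cons]
      omega

lemma shrink_inj {D a : ℕ} (hD : 1 ≤ D) (ha : 1 ≤ a) :
    ∀ l l' : List ℕ, l.Chain' (fun p q => q + D ≤ p) → (∀ y ∈ l, a ≤ y) →
      l'.Chain' (fun p q => q + D ≤ p) → (∀ y ∈ l', a ≤ y) →
      shrink l = shrink l' → l = l' := by
  intro l
  induction l with
  | nil =>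
      intro l' _ _ _ _ h
      cases l' with
      | nil => rfl
      | cons y ys => simp [shrink] at h
  | cons x xs ih =>
      intro l' hc hm hc' hm' h
      cases l' with
      | nil => simp [shrink] at h
      | cons y ys =>
        simp only [shrink, List.cons.injEq] at h
        have hlen : xs.length = ys.length := by
          have := congrArg List.length h.2
          simpa [shrink_length] using this
        have hx := head_add hD xs x hc hm
        have hy := head_add hD ys y hc' hm'
        have hxy : x = y := by omega
        have htail := ih ys hc.tail (fun z hz => hm z (by simp [hz]))
          hc'.tail (fun z hz => hm' z (by simp [hz])) h.2
        rw [hxy, htail]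

lemma shrink_mem {D a : ℕ} (hD : 1 ≤ D) :
    ∀ l : List ℕ, l.Chain' (fun p q => q + D ≤ p) → (∀ y ∈ l, a ≤ y) →
      ∀ z ∈ shrink l, a ≤ z := by
  intro l
  induction l with
  | nil => simp [shrink]
  | cons x xs ih =>
      intro hc hm z hz
      simp only [shrink, List.mem_cons] at hz
      rcases hz with rfl | hz
      · have hx := head_add hD xs x hc hm
        omega
      · exact ih hc.tail (fun w hw => hm w (by simp [hw])) z hz

lemma shrink_chain {E a : ℕ} (ha : 1 ≤ a) :
    ∀ l : List ℕ, l.Chain' (fun p q => q + (E + 1) ≤ p) → (∀ y ∈ l, a ≤ y) →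
      (shrink l).Chain' (fun p q => q + E ≤ p) := by
  intro l
  induction l with
  | nil => simp [shrink, List.Chain']
  | cons x xs ih =>
      intro hc hm
      cases xs with
      | nil => simp [shrink, List.Chain']
      | cons y ys =>
        have h2 : y + (E + 1) ≤ x := (List.isChain_cons_cons.mp hc).1
        have hy := head_add (a := a) (by omega) ys y hc.tail
          (fun z hz => hm z (by simp [hz]))
        have htail := ih hc.tail (fun z hz => hm z (by simp [hz]))
        show List.Chain' _ ((x - (y :: ys).length) :: (y - ys.length) :: shrink ys)
        refine List.isChain_cons_cons.mpr ⟨?_, htail⟩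
        simp only [List.length_cons]
        omega

lemma map_val (n : ℕ) (f : ℕ → Fin (n + 1)) (hf : ∀ x, x ≤ n → (f x).val = x) :
    ∀ m : List ℕ, (∀ x ∈ m, x ≤ n) → (m.map f).map Fin.val = m := by
  intro m hm
  induction m with
  | nil => rfl
  | cons x xs ih =>
      simp only [List.map_cons, List.cons.injEq]
      exact ⟨hf x (hm x (by simp)), ih fun y hy => hm y (by simp [hy])⟩

theorem stmt12 (d n a : ℕ) (hd : 0 < d) (hn : 0 < n) (ha : 0 < a) :
    Nat.card {l : List ℕ // IsPartition l ∧ perimeter l = n ∧ DDistinct (d + 1) l ∧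
        ∀ x ∈ l, a ≤ x}
      ≤ Nat.card {l : List ℕ // IsPartition l ∧ perimeter l = n ∧ DDistinct d l ∧
          ∀ x ∈ l, a ≤ x} := by
  -- Facts about elements of the target set
  have key : ∀ l : List ℕ, (IsPartition l ∧ perimeter l = n ∧ DDistinct d l ∧
      ∀ x ∈ l, a ≤ x) → l.length ≤ n ∧ ∀ x ∈ l, x ≤ n := by
    rintro l ⟨⟨hne, hsort, hpos⟩, hper, _, hge⟩
    obtain ⟨h, t, rfl⟩ := List.exists_cons_of_ne_nil hne
    have hh : 0 < h := hpos h (by simp)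
    have hperi : h + (t.length + 1) - 1 = n := by
      simpa [perimeter] using hper
    constructor
    · simp only [List.length_cons]; omega
    · intro x hx
      rcases List.mem_cons.mp hx with rfl | hx
      · omega
      · have := List.rel_of_pairwise_cons hsort hx
        simp only [ge_iff_le] at this
        omega
  -- Finiteness of the target
  have hfin : Finite {l : List ℕ // IsPartition l ∧ perimeter l = n ∧ DDistinct d l ∧
      ∀ x ∈ l, a ≤ x} := by
    have hF : Finite {l : List (Fin (n + 1)) | l.length ≤ n} :=
      (List.finite_length_le (Fin (n + 1)) n).to_subtype
    refine Finite.of_injective (fun l =>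
      (⟨l.val.map (fun x => (⟨min x n, by omega⟩ : Fin (n + 1))),
        by simpa using (key l.val l.property).1⟩ :
        {l : List (Fin (n + 1)) | l.length ≤ n})) ?_
    intro l l' hll
    have h1 := congrArg (fun z => List.map Fin.val z.val) hll
    simp only at h1
    rw [map_val n _ (fun x hx => by simp [min_eq_left hx]) l.val (key l.val l.property).2,
      map_val n _ (fun x hx => by simp [min_eq_left hx]) l'.val (key l'.val l'.property).2] at h1
    exact Subtype.ext h1
  -- The injection
  have ha1 : 1 ≤ a := ha
  refine Nat.card_le_card_of_injective (fun l => ⟨l.val.headI :: shrink l.val.tail, ?_⟩) ?_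
  · obtain ⟨l, ⟨hne, hsort, hpos⟩, hper, hdd, hge⟩ := l
    obtain ⟨h, t, rfl⟩ := List.exists_cons_of_ne_nil hne
    simp only [List.headI_cons, List.tail_cons]
    have hdd' : (h :: t).Chain' (fun p q => q + (d + 1) ≤ p) := hdd
    have hget : ∀ y ∈ t, a ≤ y := fun y hy => hge y (by simp [hy])
    have hchain : (h :: shrink t).Chain' (fun p q => q + d ≤ p) := by
      refine List.isChain_cons.mpr ⟨?_, shrink_chain ha1 t hdd'.tail hget⟩
      intro z hz
      cases t with
      | nil => simp [shrink] at hz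
      | cons u us =>
          have h2 : u + (d + 1) ≤ h := (List.isChain_cons_cons.mp hdd').1
          have : u - us.length = z := by
            simpa [shrink] using hz
          omega
    have hgea : ∀ x ∈ h :: shrink t, a ≤ x := by
      intro x hx
      rcases List.mem_cons.mp hx with rfl | hx
      · exact hge x (by simp)
      · exact shrink_mem (a := a) (by omega) t hdd'.tail hget x hx
    refine ⟨⟨by simp, ?_, fun x hx => by have := hgea x hx; omega⟩, ?_, hchain, hgea⟩
    · have : (h :: shrink t).Chain' (· ≥ ·) :=
        hchain.imp (fun hpq => by omega)
      exact List.isChain_iff_pairwise.mp this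
    · simpa [perimeter, shrink_length] using hper
  · rintro ⟨l, ⟨hne, _, _⟩, _, hdd, hge⟩ ⟨l', ⟨hne', _, _⟩, _, hdd', hge'⟩ hll
    obtain ⟨h, t, rfl⟩ := List.exists_cons_of_ne_nil hne
    obtain ⟨h', t', rfl⟩ := List.exists_cons_of_ne_nil hne'
    simp only [Subtype.mk.injEq, List.headI_cons, List.tail_cons,
      List.cons.injEq] at hll ⊢
    have hdd1 : (h :: t).Chain' (fun p q => q + (d + 1) ≤ p) := hdd
    have hdd1' : (h' :: t').Chain' (fun p q => q + (d + 1) ≤ p) := hdd'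
    exact ⟨hll.1, shrink_inj (by omega) ha1 t t' hdd1.tail
      (fun y hy => hge y (by simp [hy])) hdd1'.tail
      (fun y hy => hge' y (by simp [hy])) hll.2⟩
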